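/- In the ring ℚ[[x]] of formal power series, the power series G(x) = ∑_{i≥0} ε_i x^i is the multiplicative inverse of the power series ∑_{i≥0} (-1)^i (i!)²/(2i+1)! · x^i; that is, G(x) · ∑_{i≥0} (-1)^i (i!)²/(2i+1)! · x^i = 1. -/

import Mathlib

open Finset

namespace EpsAux
open PowerSeries

noncomputable def W : ℚ⟦X⟧ :=
  PowerSeries.mk fun m => if Even m ∧ m ≠ 0 then 2 / m.factorial else 0

noncomputable def sh : ℚ⟦X⟧ :=
  PowerSeries.mk fun m => if Even m then 0 else 1 / m.factorial

noncomputable def ch : ℚ⟦X⟧ :=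
  PowerSeries.mk fun m => if Even m then 1 / m.factorial else 0

noncomputable def Sh : ℚ⟦X⟧ :=
  PowerSeries.mk fun m => if Even m then 1 / (m + 1).factorial else 0

noncomputable def Phi (f : ℚ⟦X⟧) : ℚ⟦X⟧ :=
  PowerSeries.mk fun m =>
    ∑ i ∈ range (m + 1), PowerSeries.coeff i f * PowerSeries.coeff m (W ^ i)

lemma X_pow_two_dvd_W : (X : ℚ⟦X⟧) ^ 2 ∣ W := by
  rw [PowerSeries.X_pow_dvd_iff]
  intro m hm
  interval_cases m <;> simp [W, coeff_mk]

lemma coeff_W_pow_eq_zero {m i : ℕ} (h : m < 2 * i) : PowerSeries.coeff m (W ^ i) = 0 := by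
  have hdvd : (X : ℚ⟦X⟧) ^ (2 * i) ∣ W ^ i := by
    rw [pow_mul]; exact pow_dvd_pow_of_dvd X_pow_two_dvd_W i
  exact PowerSeries.X_pow_dvd_iff.1 hdvd m h

lemma coeff_W_pow_eq_zero' {m i : ℕ} (h : m < i) : PowerSeries.coeff m (W ^ i) = 0 :=
  coeff_W_pow_eq_zero (by omega)

lemma coeff_W_pow_odd {i : ℕ} : ∀ m : ℕ, ¬ Even m → PowerSeries.coeff m (W ^ i) = 0 := by
  induction i with
  | zero =>
    intro m hm
    have hm0 : m ≠ 0 := by rintro rfl; exact hm Even.zero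
    simp [PowerSeries.coeff_one, hm0]
  | succ i ih =>
    intro m hm
    rw [pow_succ, PowerSeries.coeff_mul]
    apply Finset.sum_eq_zero
    rintro ⟨p, q⟩ hpq
    rw [Finset.HasAntidiagonal.mem_antidiagonal] at hpq
    rcases Nat.even_or_odd p with hp | hp
    · have hq : ¬ Even q := by
        intro hqe; exact hm (by rw [← hpq]; exact hp.add hqe)
      have : PowerSeries.coeff q W = 0 := by
        simp [W, coeff_mk, hq]
      simp [this]
    · rw [ih p (Nat.not_even_iff_odd.mpr hp), zero_mul]

lemma coeff_two_mul_W_pow : ∀ n : ℕ, PowerSeries.coeff (2 * n) (W ^ n) = 1 := by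
  intro n
  induction n with
  | zero => simp
  | succ n ih =>
    rw [pow_succ, PowerSeries.coeff_mul]
    rw [Finset.sum_eq_single (2 * n, 2)]
    · rw [ih, one_mul]
      norm_num [W, coeff_mk, Nat.factorial]
    · rintro ⟨p, q⟩ hpq hne
      rw [Finset.HasAntidiagonal.mem_antidiagonal] at hpq
      rcases lt_trichotomy p (2 * n) with h | h | h
      · rw [coeff_W_pow_eq_zero (by omega), zero_mul]
      · exfalso; apply hne; simp [h]; omega
      · have hq : q < 2 := by omega
        have : PowerSeries.coeff q W = 0 := by
          interval_cases q <;> simp [W, coeff_mk]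
        rw [this, mul_zero]
    · intro h
      exfalso; apply h; rw [Finset.HasAntidiagonal.mem_antidiagonal]; omega

lemma coeff_Phi_eq (f : ℚ⟦X⟧) {m N : ℕ} (h : m < N) :
    PowerSeries.coeff m (Phi f) =
      ∑ i ∈ range N, PowerSeries.coeff i f * PowerSeries.coeff m (W ^ i) := by
  rw [Phi, coeff_mk]
  apply Finset.sum_subset
  · exact Finset.range_subset_range.2 h
  · intro i hi hni
    rw [Finset.mem_range, not_lt] at hni
    rw [coeff_W_pow_eq_zero' (by omega), mul_zero]

lemma Phi_C (a : ℚ) : Phi (PowerSeries.C a) = PowerSeries.C a := by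
  ext m
  rw [Phi, coeff_mk]
  rw [Finset.sum_eq_single 0]
  · simp [PowerSeries.coeff_C]
  · intro i hi hne
    simp [PowerSeries.coeff_C, hne]
  · intro h; simp at h

lemma Phi_one : Phi 1 = 1 := by
  have := Phi_C 1
  simpa using this

lemma Phi_X : Phi X = W := by
  ext m
  rw [Phi, coeff_mk]
  rcases Nat.eq_zero_or_pos m with rfl | hm
  · simp [PowerSeries.coeff_X, W, coeff_mk]
  · rw [Finset.sum_eq_single 1]
    · simp [PowerSeries.coeff_X]
    · intro i hi hne
      simp [PowerSeries.coeff_X, hne]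
    · intro h
      exfalso; apply h; rw [Finset.mem_range]; omega

lemma Phi_add (f g : ℚ⟦X⟧) : Phi (f + g) = Phi f + Phi g := by
  ext m
  simp only [Phi, coeff_mk, map_add, add_mul, Finset.sum_add_distrib]

lemma Phi_mul (f g : ℚ⟦X⟧) : Phi (f * g) = Phi f * Phi g := by
  ext m
  have hsquare :
      PowerSeries.coeff m (Phi f * Phi g) =
        ∑ p ∈ range (m + 1) ×ˢ range (m + 1),
          PowerSeries.coeff p.1 f * PowerSeries.coeff p.2 g *
            PowerSeries.coeff m (W ^ (p.1 + p.2)) := by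
    rw [PowerSeries.coeff_mul]
    have step1 : ∀ p ∈ antidiagonal m,
        PowerSeries.coeff p.1 (Phi f) * PowerSeries.coeff p.2 (Phi g)
          = ∑ q ∈ range (m + 1) ×ˢ range (m + 1),
              PowerSeries.coeff q.1 f * PowerSeries.coeff q.2 g *
                (PowerSeries.coeff p.1 (W ^ q.1) * PowerSeries.coeff p.2 (W ^ q.2)) := by
      intro p hp
      rw [Finset.HasAntidiagonal.mem_antidiagonal] at hp
      rw [coeff_Phi_eq f (show p.1 < m + 1 by omega),
        coeff_Phi_eq g (show p.2 < m + 1 by omega), Finset.sum_mul_sum,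
        ← Finset.sum_product']
      exact Finset.sum_congr rfl fun q _ => by ring
    rw [Finset.sum_congr rfl step1, Finset.sum_comm]
    refine Finset.sum_congr rfl fun q _ => ?_
    rw [← Finset.mul_sum, ← PowerSeries.coeff_mul, ← pow_add]
  rw [hsquare]
  have htri :
      PowerSeries.coeff m (Phi (f * g)) =
        ∑ p ∈ (range (m + 1) ×ˢ range (m + 1)).filter (fun p => p.1 + p.2 ≤ m),
          PowerSeries.coeff p.1 f * PowerSeries.coeff p.2 g *
            PowerSeries.coeff m (W ^ (p.1 + p.2)) := by
    rw [Phi, coeff_mk]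
    have hcoeff : ∀ k ∈ range (m + 1),
        PowerSeries.coeff k (f * g) * PowerSeries.coeff m (W ^ k)
          = ∑ p ∈ antidiagonal k,
              PowerSeries.coeff p.1 f * PowerSeries.coeff p.2 g *
                PowerSeries.coeff m (W ^ (p.1 + p.2)) := by
      intro k hk
      rw [PowerSeries.coeff_mul, Finset.sum_mul]
      refine Finset.sum_congr rfl fun p hp => ?_
      rw [Finset.HasAntidiagonal.mem_antidiagonal] at hp
      rw [hp]
    rw [Finset.sum_congr rfl hcoeff, ← Finset.sum_biUnion]
    · apply Finset.sum_congr
      · ext p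
        simp only [Finset.mem_biUnion, Finset.HasAntidiagonal.mem_antidiagonal, Finset.mem_filter,
          Finset.mem_product, Finset.mem_range]
        constructor
        · rintro ⟨k, hk, rfl⟩; omega
        · rintro ⟨⟨h1, h2⟩, h3⟩; exact ⟨p.1 + p.2, by omega, rfl⟩
      · intro p _; rfl
    · intro a _ b _ hab
      simp only [Finset.disjoint_left, Finset.HasAntidiagonal.mem_antidiagonal]
      intro p hpa hpb
      exact hab (by omega)
  rw [htri]
  apply Finset.sum_filter_of_ne
  intro p hp hne
  by_contra hgt
  exact hne (by rw [coeff_W_pow_eq_zero' (by omega), mul_zero])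

lemma Phi_injective : Function.Injective Phi := by
  intro f g h
  by_contra hne
  have hex : ∃ n, PowerSeries.coeff n f ≠ PowerSeries.coeff n g := by
    by_contra hc
    push_neg at hc
    exact hne (PowerSeries.ext hc)
  classical
  set n := Nat.find hex with hn
  have hspec : PowerSeries.coeff n f ≠ PowerSeries.coeff n g := Nat.find_spec hex
  have hmin : ∀ m < n, PowerSeries.coeff m f = PowerSeries.coeff m g := by
    intro m hm
    have := Nat.find_min hex hm
    exact not_not.1 this
  have hc := congrArg (PowerSeries.coeff (2 * n)) h
  rw [Phi, Phi, coeff_mk, coeff_mk] at hc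
  have hsum : ∑ i ∈ range (2 * n + 1),
      (PowerSeries.coeff i f - PowerSeries.coeff i g) *
        PowerSeries.coeff (2 * n) (W ^ i) = 0 := by
    simp only [sub_mul, Finset.sum_sub_distrib, hc, sub_self]
  rw [Finset.sum_eq_single n] at hsum
  · rw [coeff_two_mul_W_pow, mul_one, sub_eq_zero] at hsum
    exact hspec hsum
  · intro i hi hine
    rcases lt_or_gt_of_ne hine with hlt | hgt
    · rw [hmin i hlt, sub_self, zero_mul]
    · rw [coeff_W_pow_eq_zero (by omega), mul_zero]
  · intro hni
    exfalso; apply hni; rw [Finset.mem_range]; omega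

lemma Phi_derivative (f : ℚ⟦X⟧) :
    d⁄dX ℚ (Phi f) = Phi (d⁄dX ℚ f) * d⁄dX ℚ W := by
  ext m
  have hstep : ∀ i : ℕ,
      PowerSeries.coeff (m + 1) (W ^ (i + 1)) * ((m : ℚ) + 1)
        = ((i : ℚ) + 1) * PowerSeries.coeff m (W ^ i * d⁄dX ℚ W) := by
    intro i
    have h2 := PowerSeries.coeff_derivative (W ^ (i + 1)) m
    rw [Derivation.leibniz_pow, Nat.add_sub_cancel, smul_eq_mul, map_nsmul, nsmul_eq_mul] at h2
    push_cast at h2 ⊢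
    linarith [h2]
  rw [PowerSeries.coeff_derivative, coeff_Phi_eq f (show m + 1 < m + 2 by omega),
    Finset.sum_mul, Finset.sum_range_succ']
  have h0 : PowerSeries.coeff 0 f * PowerSeries.coeff (m + 1) ((W : ℚ⟦X⟧) ^ 0) * ((m : ℚ) + 1)
      = 0 := by
    simp [PowerSeries.coeff_one]
  push_cast
  rw [h0, add_zero]
  rw [PowerSeries.coeff_mul]
  have hR : ∀ p ∈ antidiagonal m,
      PowerSeries.coeff p.1 (Phi (d⁄dX ℚ f)) * PowerSeries.coeff p.2 (d⁄dX ℚ W)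
        = ∑ i ∈ range (m + 1), PowerSeries.coeff i (d⁄dX ℚ f) *
            (PowerSeries.coeff p.1 (W ^ i) * PowerSeries.coeff p.2 (d⁄dX ℚ W)) := by
    intro p hp
    rw [Finset.HasAntidiagonal.mem_antidiagonal] at hp
    rw [coeff_Phi_eq (d⁄dX ℚ f) (show p.1 < m + 1 by omega), Finset.sum_mul]
    exact Finset.sum_congr rfl fun i _ => by ring
  rw [Finset.sum_congr rfl hR, Finset.sum_comm]
  refine Finset.sum_congr rfl fun i _ => ?_
  rw [← Finset.mul_sum, ← PowerSeries.coeff_mul, PowerSeries.coeff_derivative]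
  push_cast
  rw [mul_assoc, hstep]
  ring

lemma derivative_W : d⁄dX ℚ W = PowerSeries.C 2 * sh := by
  ext m
  rw [PowerSeries.coeff_derivative, PowerSeries.coeff_C_mul, W, sh, coeff_mk, coeff_mk]
  rcases Nat.even_or_odd m with hm | hm
  · have h1 : ¬ (Even (m + 1) ∧ m + 1 ≠ 0) := by
      rintro ⟨h, -⟩
      exact (Nat.even_add_one.mp h) hm
    rw [if_pos hm, if_neg h1, zero_mul, mul_zero]
  · have h1 : Even (m + 1) ∧ m + 1 ≠ 0 := ⟨Nat.even_add_one.mpr (Nat.not_even_iff_odd.mpr hm), by omega⟩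
    rw [if_pos h1, if_neg (Nat.not_even_iff_odd.mpr hm)]
    rw [Nat.factorial_succ]
    have hne : ((m.factorial : ℚ)) ≠ 0 := Nat.cast_ne_zero.mpr (Nat.factorial_ne_zero m)
    have hne2 : ((m : ℚ) + 1) ≠ 0 := by positivity
    push_cast
    field_simp

lemma derivative_sh : d⁄dX ℚ sh = ch := by
  ext m
  rw [PowerSeries.coeff_derivative, sh, ch, coeff_mk, coeff_mk]
  rcases Nat.even_or_odd m with hm | hm
  · have h1 : ¬ Even (m + 1) := by
      intro h; exact (Nat.even_add_one.mp h) hm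
    rw [if_pos hm, if_neg h1, Nat.factorial_succ]
    have hne : ((m.factorial : ℚ)) ≠ 0 := Nat.cast_ne_zero.mpr (Nat.factorial_ne_zero m)
    have hne2 : ((m : ℚ) + 1) ≠ 0 := by positivity
    push_cast
    field_simp
  · have h1 : Even (m + 1) := Nat.even_add_one.mpr (Nat.not_even_iff_odd.mpr hm)
    rw [if_pos h1, if_neg (Nat.not_even_iff_odd.mpr hm), zero_mul]

lemma ch_add_sh : ch + sh = PowerSeries.exp ℚ := by
  ext m
  rw [map_add, ch, sh, coeff_mk, coeff_mk, PowerSeries.coeff_exp]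
  rcases Nat.even_or_odd m with hm | hm
  · rw [if_pos hm, if_pos hm]
    simp [Algebra.algebraMap_self]
  · rw [if_neg (Nat.not_even_iff_odd.mpr hm), if_neg (Nat.not_even_iff_odd.mpr hm)]
    simp [Algebra.algebraMap_self]

lemma ch_sub_sh : ch - sh = PowerSeries.evalNegHom (PowerSeries.exp ℚ) := by
  ext m
  rw [map_sub, ch, sh, coeff_mk, coeff_mk, PowerSeries.evalNegHom,
    PowerSeries.coeff_rescale, PowerSeries.coeff_exp]
  rcases Nat.even_or_odd m with hm | hm
  · rw [if_pos hm, if_pos hm, hm.neg_one_pow]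
    simp [Algebra.algebraMap_self]
  · rw [if_neg (Nat.not_even_iff_odd.mpr hm), if_neg (Nat.not_even_iff_odd.mpr hm),
      hm.neg_one_pow]
    simp [Algebra.algebraMap_self]

lemma pyth : ch ^ 2 - sh ^ 2 = 1 := by
  have h := PowerSeries.exp_mul_exp_neg_eq_one (A := ℚ)
  rw [← ch_sub_sh, ← ch_add_sh] at h
  linear_combination h

lemma W_eq : W = PowerSeries.C 2 * ch - PowerSeries.C 2 := by
  ext m
  rw [map_sub, PowerSeries.coeff_C_mul, W, ch, coeff_mk, coeff_mk, PowerSeries.coeff_C]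
  rcases Nat.eq_zero_or_pos m with rfl | hm
  · norm_num
  · rcases Nat.even_or_odd m with hme | hme
    · rw [if_pos ⟨hme, by omega⟩, if_pos hme, if_neg (by omega)]
      ring
    · rw [if_neg (by rintro ⟨h, -⟩; exact (Nat.not_even_iff_odd.mpr hme) h),
        if_neg (Nat.not_even_iff_odd.mpr hme), if_neg (by omega)]
      ring

lemma dW_sq : d⁄dX ℚ W * d⁄dX ℚ W = W * (W + PowerSeries.C 4) := by
  have hab : (PowerSeries.C 2 : ℚ⟦X⟧) + PowerSeries.C 2 = PowerSeries.C 4 := by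
    rw [← map_add]; norm_num
  rw [derivative_W, W_eq]
  linear_combination (-(PowerSeries.C 2 * PowerSeries.C 2)) * pyth +
    (PowerSeries.C 2 * ch - PowerSeries.C 2) * hab

lemma sh_eq_X_mul_Sh : sh = X * Sh := by
  ext m
  rcases Nat.eq_zero_or_pos m with rfl | hm
  · simp [sh, coeff_mk]
  · obtain ⟨k, rfl⟩ : ∃ k, m = k + 1 := ⟨m - 1, by omega⟩
    rw [PowerSeries.coeff_succ_X_mul, sh, Sh, coeff_mk, coeff_mk]
    rcases Nat.even_or_odd k with hk | hk
    · rw [if_pos hk, if_neg (by intro h; exact (Nat.even_add_one.mp h) hk)]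
    · rw [if_neg (Nat.not_even_iff_odd.mpr hk),
        if_pos (Nat.even_add_one.mpr (Nat.not_even_iff_odd.mpr hk))]

noncomputable def Aser : ℚ⟦X⟧ :=
  PowerSeries.mk fun i =>
    (-1 : ℚ) ^ i * ((i.factorial : ℚ) ^ 2 / ((2 * i + 1).factorial : ℚ))

lemma acoef (i : ℕ) : PowerSeries.coeff i Aser
    = (-1 : ℚ) ^ i * ((i.factorial : ℚ) ^ 2 / ((2 * i + 1).factorial : ℚ)) := coeff_mk i _

lemma crec (n : ℕ) :
    (2 * (2 * (n : ℚ) + 3)) * PowerSeries.coeff (n + 1) Aser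
      + ((n : ℚ) + 1) * PowerSeries.coeff n Aser = 0 := by
  rw [acoef, acoef]
  have h1 : (2 * (n + 1) + 1) = (2 * n + 1) + 2 := by omega
  rw [h1]
  have h2 : ((2 * n + 1) + 2).factorial = ((2*n+3) * (2*n+2)) * (2*n+1).factorial := by
    rw [show (2*n+1)+2 = (2*n+2)+1 by omega, Nat.factorial_succ, Nat.factorial_succ]
    ring_nf
  rw [h2, Nat.factorial_succ]
  have hne : ((2*n+1).factorial : ℚ) ≠ 0 := Nat.cast_ne_zero.mpr (Nat.factorial_ne_zero _)
  have hne2 : ((n).factorial : ℚ) ≠ 0 := Nat.cast_ne_zero.mpr (Nat.factorial_ne_zero _)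
  push_cast
  rw [pow_succ]
  field_simp
  ring

lemma ODE :
    (X : ℚ⟦X⟧) * X * d⁄dX ℚ Aser + PowerSeries.C 4 * (X * d⁄dX ℚ Aser)
      + X * Aser + PowerSeries.C 2 * Aser = PowerSeries.C 2 := by
  ext n
  simp only [map_add, PowerSeries.coeff_C_mul]
  match n with
  | 0 =>
    have hx : ∀ g : ℚ⟦X⟧, PowerSeries.coeff 0 ((X : ℚ⟦X⟧) * g) = 0 := by
      intro g
      rw [show ((X : ℚ⟦X⟧) * g) = (X : ℚ⟦X⟧) * g from rfl]
      simp [PowerSeries.coeff_zero_eq_constantCoeff]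
    rw [mul_assoc, hx, hx, hx, PowerSeries.coeff_C]
    rw [acoef]
    norm_num [Nat.factorial]
  | 1 =>
    have hx1 : ∀ g : ℚ⟦X⟧, PowerSeries.coeff 1 ((X : ℚ⟦X⟧) * X * g) = 0 := by
      intro g
      rw [mul_assoc, PowerSeries.coeff_succ_X_mul]
      simp [PowerSeries.coeff_zero_eq_constantCoeff]
    rw [hx1, PowerSeries.coeff_succ_X_mul, PowerSeries.coeff_succ_X_mul,
      PowerSeries.coeff_derivative, PowerSeries.coeff_C]
    norm_num [acoef, Nat.factorial]
  | (k+2) =>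
    have hxx : PowerSeries.coeff (k+2) ((X : ℚ⟦X⟧) * X * d⁄dX ℚ Aser)
        = PowerSeries.coeff k (d⁄dX ℚ Aser) := by
      rw [mul_assoc, PowerSeries.coeff_succ_X_mul, PowerSeries.coeff_succ_X_mul]
    rw [hxx, PowerSeries.coeff_succ_X_mul, PowerSeries.coeff_succ_X_mul,
      PowerSeries.coeff_derivative, PowerSeries.coeff_derivative, PowerSeries.coeff_C]
    rw [if_neg (by omega)]
    have h1 := crec k
    have h2 := crec (k+1)
    push_cast at *
    nlinarith [h1, h2]

lemma phi_ODE :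
    W * W * Phi (d⁄dX ℚ Aser) + PowerSeries.C 4 * (W * Phi (d⁄dX ℚ Aser))
      + W * Phi Aser + PowerSeries.C 2 * Phi Aser = PowerSeries.C 2 := by
  have h := congrArg Phi ODE
  rw [Phi_add, Phi_add, Phi_add, Phi_mul, Phi_mul, Phi_mul, Phi_mul, Phi_mul, Phi_mul, Phi_X,
    Phi_C, Phi_C] at h
  exact h

lemma key_ode : sh * d⁄dX ℚ (Phi Aser) + ch * Phi Aser = 1 := by
  set D := Phi Aser with hD
  set P := Phi (d⁄dX ℚ Aser) with hP
  have hchain : d⁄dX ℚ D = P * d⁄dX ℚ W := Phi_derivative Aser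
  have h1 := phi_ODE
  have h2 : d⁄dX ℚ W * d⁄dX ℚ D + (W + PowerSeries.C 2) * D = PowerSeries.C 2 := by
    rw [hchain]
    calc d⁄dX ℚ W * (P * d⁄dX ℚ W) + (W + PowerSeries.C 2) * D
        = (d⁄dX ℚ W * d⁄dX ℚ W) * P + (W + PowerSeries.C 2) * D := by ring
      _ = W * (W + PowerSeries.C 4) * P + (W + PowerSeries.C 2) * D := by rw [dW_sq]
      _ = W * W * P + PowerSeries.C 4 * (W * P) + W * D + PowerSeries.C 2 * D := by ring
      _ = PowerSeries.C 2 := h1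
  -- now dW = C 2 * sh, W + C 2 = C 2 * ch
  have hW2 : W + PowerSeries.C 2 = PowerSeries.C 2 * ch := by
    rw [W_eq]; ring
  rw [derivative_W, hW2] at h2
  have h3 : PowerSeries.C 2 * (sh * d⁄dX ℚ D + ch * D) = PowerSeries.C 2 * 1 := by
    rw [mul_one]
    calc PowerSeries.C 2 * (sh * d⁄dX ℚ D + ch * D)
        = PowerSeries.C 2 * sh * d⁄dX ℚ D + PowerSeries.C 2 * ch * D := by ring
      _ = PowerSeries.C 2 := h2
  have hC2 : (PowerSeries.C 2 : ℚ⟦X⟧) ≠ 0 := by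
    intro h
    have := congrArg (PowerSeries.constantCoeff) h
    simp at this
  exact mul_left_cancel₀ hC2 h3

lemma sh_mul_D : sh * Phi Aser = X := by
  apply PowerSeries.derivative.ext
  · rw [Derivation.leibniz, smul_eq_mul, smul_eq_mul, PowerSeries.derivative_X, derivative_sh]
    calc sh * d⁄dX ℚ (Phi Aser) + Phi Aser * ch
        = sh * d⁄dX ℚ (Phi Aser) + ch * Phi Aser := by ring
      _ = 1 := key_ode
  · simp only [map_mul]
    have : PowerSeries.constantCoeff sh = 0 := by
      simp [sh, PowerSeries.coeff_zero_eq_constantCoeff]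
    rw [this, zero_mul]
    simp

lemma Sh_mul_D : Sh * Phi Aser = 1 := by
  have h := sh_mul_D
  rw [sh_eq_X_mul_Sh] at h
  have h2 : (X : ℚ⟦X⟧) * (Sh * Phi Aser) = X * 1 := by
    calc (X : ℚ⟦X⟧) * (Sh * Phi Aser) = X * Sh * Phi Aser := by ring
      _ = X := h
      _ = X * 1 := (mul_one X).symm
  exact mul_left_cancel₀ PowerSeries.X_ne_zero h2

lemma japply (i : ℕ) (c : Fin i → ℕ) (s : ℕ) :
    (∑ t : Fin i, Finsupp.single (t : ℕ) (2 * c t)) s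
      = if h : s < i then 2 * c ⟨s, h⟩ else 0 := by
  rw [Finsupp.finset_sum_apply]
  by_cases h : s < i
  · rw [dif_pos h, Finset.sum_eq_single (⟨s, h⟩ : Fin i)]
    · simp [Finsupp.single_apply]
    · intro t _ htne
      rw [Finsupp.single_apply, if_neg]
      intro he
      exact htne (Fin.ext he)
    · intro hmem; exact absurd (Finset.mem_univ _) hmem
  · rw [dif_neg h]
    apply Finset.sum_eq_zero
    intro t _
    rw [Finsupp.single_apply, if_neg]
    intro he
    exact h (he ▸ t.isLt)

lemma coeff_W_pow_comp (l i : ℕ) (hl : 1 ≤ l) :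
    PowerSeries.coeff (2 * l) (W ^ i)
      = ∑ c ∈ (Fintype.piFinset fun _ : Fin i => Finset.Icc 1 l).filter
          (fun c => ∑ t, c t = l), ∏ t, (2 / ((2 * c t).factorial : ℚ)) := by
  classical
  rw [PowerSeries.coeff_pow]
  rw [← Finset.sum_filter_of_ne
    (p := fun d : ℕ →₀ ℕ => ∀ t ∈ range i, Even (d t) ∧ d t ≠ 0)
    (by
      intro d hd hprod t ht
      by_contra hcon
      apply hprod
      apply Finset.prod_eq_zero ht
      simp only [W, coeff_mk]
      rw [if_neg hcon])]
  apply Finset.sum_nbij' (i := fun d (t : Fin i) => d ↑t / 2)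
    (j := fun c => ∑ t : Fin i, Finsupp.single (t : ℕ) (2 * c t))
  · -- maps into target
    intro d hd
    rw [Finset.mem_filter, Finset.mem_finsuppAntidiag] at hd
    obtain ⟨⟨hsum, hsupp⟩, hp⟩ := hd
    rw [Finset.mem_filter]
    have heven : ∀ t : Fin i, Even (d ↑t) ∧ d ↑t ≠ 0 := by
      intro t
      exact hp ↑t (Finset.mem_range.mpr t.isLt)
    have hdvd : ∀ t : Fin i, 2 * (d ↑t / 2) = d ↑t := by
      intro t
      exact Nat.mul_div_cancel' ((heven t).1.two_dvd)
    have hle : ∀ t : Fin i, d ↑t ≤ 2 * l := by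
      intro t
      rw [← hsum]
      exact Finset.single_le_sum (fun x _ => Nat.zero_le _) (Finset.mem_range.mpr t.isLt)
    have hsum2 : ∑ t : Fin i, d ↑t = 2 * l := by
      rw [Fin.sum_univ_eq_sum_range (fun s => d s) i]
      exact hsum
    constructor
    · rw [Fintype.mem_piFinset]
      intro t
      rw [Finset.mem_Icc]
      constructor
      · have h1 := (heven t).1
        have h2 := (heven t).2
        obtain ⟨k, hk⟩ := h1
        omega
      · have := hle t
        omega
    · show ∑ t : Fin i, d ↑t / 2 = l
      have : 2 * ∑ t : Fin i, (d ↑t / 2) = 2 * l := by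
        rw [Finset.mul_sum, Finset.sum_congr rfl fun t _ => hdvd t, hsum2]
      omega
  · -- reverse map into source
    intro c hc
    rw [Finset.mem_filter, Fintype.mem_piFinset] at hc
    obtain ⟨hpi, hsum⟩ := hc
    rw [Finset.mem_filter, Finset.mem_finsuppAntidiag]
    refine ⟨⟨?_, ?_⟩, ?_⟩
    · rw [← Fin.sum_univ_eq_sum_range (fun s => (∑ t : Fin i, Finsupp.single (t : ℕ) (2 * c t)) s) i]
      have : ∀ t : Fin i, (∑ t' : Fin i, Finsupp.single (t' : ℕ) (2 * c t')) ↑t = 2 * c t := by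
        intro t
        rw [japply, dif_pos t.isLt, Fin.eta]
      rw [Finset.sum_congr rfl fun t _ => this t, ← Finset.mul_sum, hsum]
    · intro s hs
      rw [Finsupp.mem_support_iff] at hs
      rw [Finset.mem_range]
      by_contra hlt
      exact hs (by rw [japply, dif_neg hlt])
    · intro s hs
      rw [Finset.mem_range] at hs
      rw [japply, dif_pos hs]
      have := (hpi ⟨s, hs⟩)
      rw [Finset.mem_Icc] at this
      constructor
      · exact even_two_mul _
      · omega
  · -- left inverse
    intro d hd
    rw [Finset.mem_filter, Finset.mem_finsuppAntidiag] at hd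
    obtain ⟨⟨hsum, hsupp⟩, hp⟩ := hd
    ext s
    rw [japply]
    by_cases h : s < i
    · rw [dif_pos h]
      exact Nat.mul_div_cancel' ((hp s (Finset.mem_range.mpr h)).1.two_dvd)
    · rw [dif_neg h]
      by_contra hne
      have : s ∈ d.support := Finsupp.mem_support_iff.mpr fun h0 => hne h0.symm
      have := hsupp this
      rw [Finset.mem_range] at this
      exact h this
  · -- right inverse
    intro c hc
    funext t
    rw [japply, dif_pos t.isLt, Fin.eta]
    omega
  · -- values agree
    intro d hd
    rw [Finset.mem_filter, Finset.mem_finsuppAntidiag] at hd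
    obtain ⟨⟨hsum, hsupp⟩, hp⟩ := hd
    rw [← Fin.prod_univ_eq_prod_range (fun s => PowerSeries.coeff (d s) W) i]
    refine Finset.prod_congr rfl fun t _ => ?_
    have hpt := hp ↑t (Finset.mem_range.mpr t.isLt)
    have hdvd : 2 * (d ↑t / 2) = d ↑t := Nat.mul_div_cancel' hpt.1.two_dvd
    rw [hdvd]
    simp only [W, coeff_mk]
    rw [if_pos hpt]

lemma Phi_eps (ε : ℕ → ℚ) (h0 : ε 0 = 1)
    (h1 : ∀ l : ℕ, 1 ≤ l →
      (1 : ℚ) / ((2 * l + 1).factorial : ℚ) =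
        ∑ i ∈ Finset.Icc 1 l,
          ∑ c ∈ (Fintype.piFinset fun _ : Fin i => Finset.Icc 1 l).filter
              (fun c => ∑ t, c t = l),
            2 ^ i * ε i / ∏ t, ((2 * c t).factorial : ℚ)) :
    Phi (PowerSeries.mk ε) = Sh := by
  ext m
  rw [Phi, coeff_mk, Sh, coeff_mk]
  simp only [coeff_mk]
  rcases Nat.even_or_odd m with hm | hm
  · obtain ⟨l, rfl⟩ := hm
    rw [if_pos ⟨l, rfl⟩]
    rcases Nat.eq_zero_or_pos l with rfl | hl
    · simp [h0, Nat.factorial]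
    · have hIcc : Finset.Icc 1 l ⊆ range (l + l + 1) := by
        intro x hx
        rw [Finset.mem_Icc] at hx
        rw [Finset.mem_range]
        omega
      have hzero : ∀ x ∈ range (l + l + 1), x ∉ Finset.Icc 1 l →
          ε x * PowerSeries.coeff (l + l) (W ^ x) = 0 := by
        intro x hx hnx
        rw [Finset.mem_range] at hx
        rw [Finset.mem_Icc] at hnx
        push_neg at hnx
        rcases Nat.eq_zero_or_pos x with rfl | hxpos
        · rw [pow_zero, PowerSeries.coeff_one, if_neg (by omega), mul_zero]
        · have hxl : l < x := hnx hxpos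
          rw [coeff_W_pow_eq_zero (by omega), mul_zero]
      rw [← Finset.sum_subset hIcc hzero]
      have hrw : ∀ x ∈ Finset.Icc 1 l, ε x * PowerSeries.coeff (l + l) (W ^ x)
          = ∑ c ∈ (Fintype.piFinset fun _ : Fin x => Finset.Icc 1 l).filter
              (fun c => ∑ t, c t = l),
              2 ^ x * ε x / ∏ t, ((2 * c t).factorial : ℚ) := by
        intro x _
        rw [show l + l = 2 * l by ring, coeff_W_pow_comp l x hl, Finset.mul_sum]
        refine Finset.sum_congr rfl fun c _ => ?_
        rw [Finset.prod_div_distrib, Finset.prod_const]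
        simp only [Finset.card_univ, Fintype.card_fin]
        ring
      rw [Finset.sum_congr rfl hrw, ← h1 l hl]
      have hll : l + l + 1 = 2 * l + 1 := by ring
      rw [hll]
  · rw [if_neg (Nat.not_even_iff_odd.mpr hm)]
    apply Finset.sum_eq_zero
    intro i _
    rw [coeff_W_pow_odd m (Nat.not_even_iff_odd.mpr hm), mul_zero]

end EpsAux

/-- The defining property of the sequence `ε`: `ε 0 = 1` and for each `l ≥ 1`,
`1/(2l+1)! = ∑_{i=1}^{l} ∑_{j₁+⋯+jᵢ=l, jₜ ≥ 1} 2^i εᵢ / ((2j₁)!⋯(2jᵢ)!)`. -/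
def IsEpsilon (ε : ℕ → ℚ) : Prop :=
  ε 0 = 1 ∧ ∀ l : ℕ, 1 ≤ l →
    (1 : ℚ) / ((2 * l + 1).factorial : ℚ) =
      ∑ i ∈ Finset.Icc 1 l,
        ∑ c ∈ (Fintype.piFinset fun _ : Fin i => Finset.Icc 1 l).filter
            (fun c => ∑ t, c t = l),
          2 ^ i * ε i / ∏ t, ((2 * c t).factorial : ℚ)

theorem epsilon_series_mul_inverse (ε : ℕ → ℚ) (hε : IsEpsilon ε) :
    (PowerSeries.mk fun i => ε i) *
        (PowerSeries.mk fun i =>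
          (-1 : ℚ) ^ i * ((i.factorial : ℚ) ^ 2 / ((2 * i + 1).factorial : ℚ))) = 1 := by
  obtain ⟨h0, h1⟩ := hε
  have key : (PowerSeries.mk fun i => ε i) * EpsAux.Aser = 1 := by
    apply EpsAux.Phi_injective
    rw [EpsAux.Phi_mul, EpsAux.Phi_one, EpsAux.Phi_eps (fun i => ε i) h0 h1,
      EpsAux.Sh_mul_D]
  exact key
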